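/- For a function f : {-1,1}^n → ℝ, the following are equivalent: (1) f(x) = 0 for all x with an even number of -1 coordinates; (2) for every S ⊆ [n], the Fourier coefficient f̂(S) equals −f̂(S̄), where S̄ is the complement of S. -/

import Mathlib

open Finset

noncomputable section

/-- sign of a bit: `true` ↦ -1 (representing the bit -1), `false` ↦ 1. -/
def bsgn (b : Bool) : ℝ := if b then -1 else 1

/-- character χ_S(x) = ∏_{i ∈ S} x_i on the cube {-1,1}^n. -/
def chiCube {n : ℕ} (S : Finset (Fin n)) (x : Fin n → Bool) : ℝ := ∏ i ∈ S, bsgn (x i)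

/-- expectation under the uniform distribution on a finite type. -/
def expec {α : Type*} [Fintype α] (f : α → ℝ) : ℝ := (∑ x, f x) / (Fintype.card α)

/-- Fourier coefficient f̂(S) = E_x[f(x)·χ_S(x)]. -/
def fhat {n : ℕ} (f : (Fin n → Bool) → ℝ) (S : Finset (Fin n)) : ℝ :=
  expec fun x => f x * chiCube S x

/-- variance under the uniform distribution. -/
def cubeVar {α : Type*} [Fintype α] (f : α → ℝ) : ℝ :=
  expec (fun x => f x ^ 2) - (expec f) ^ 2

/-- merge: equals `x` on `J` and `z` off `J`. -/
def mergeOn {n : ℕ} (J : Finset (Fin n)) (x z : Fin n → Bool) : Fin n → Bool :=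
  fun i => if i ∈ J then x i else z i

lemma bsgn_mul_self (b : Bool) : bsgn b * bsgn b = 1 := by cases b <;> simp [bsgn]

lemma chi_mul_self {n} (S : Finset (Fin n)) (x) : chiCube S x * chiCube S x = 1 := by
  rw [chiCube, ← Finset.prod_mul_distrib]
  simp [bsgn_mul_self]

lemma chi_compl {n} (S : Finset (Fin n)) (x) :
    chiCube Sᶜ x = chiCube univ x * chiCube S x := by
  have h : chiCube S x * chiCube Sᶜ x = chiCube univ x := by
    rw [chiCube, chiCube, chiCube, Finset.prod_mul_prod_compl]
  calc chiCube Sᶜ x = chiCube S x * chiCube S x * chiCube Sᶜ x := by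
        rw [chi_mul_self, one_mul]
    _ = chiCube univ x * chiCube S x := by rw [mul_assoc, h, mul_comm]

lemma chi_univ {n} (x : Fin n → Bool) :
    chiCube univ x = (-1:ℝ) ^ ((univ.filter fun i => x i)).card := by
  rw [chiCube]
  simp only [bsgn]
  rw [Finset.prod_ite, Finset.prod_const, Finset.prod_const, one_pow, mul_one]

lemma sum_chi {n} (x y : Fin n → Bool) :
    ∑ S : Finset (Fin n), chiCube S x * chiCube S y = if x = y then (2:ℝ)^n else 0 := by
  have h1 : ∀ S : Finset (Fin n), chiCube S x * chiCube S y
      = ∏ i ∈ S, (bsgn (x i) * bsgn (y i)) := by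
    intro S; rw [chiCube, chiCube, Finset.prod_mul_distrib]
  simp_rw [h1]
  have h2 : ∑ S : Finset (Fin n), ∏ i ∈ S, (bsgn (x i) * bsgn (y i))
      = ∏ i : Fin n, (bsgn (x i) * bsgn (y i) + 1) := by
    rw [Finset.prod_add]
    rw [← Finset.powerset_univ]
    apply Finset.sum_congr rfl
    intro t _; simp
  rw [h2]
  by_cases hxy : x = y
  · subst hxy
    simp only [if_pos rfl]
    have : ∀ i : Fin n, bsgn (x i) * bsgn (x i) + 1 = 2 := by
      intro i; rw [bsgn_mul_self]; norm_num
    rw [Finset.prod_congr rfl (fun i _ => this i), Finset.prod_const]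
    simp
  · rw [if_neg hxy]
    obtain ⟨i, hi⟩ : ∃ i, x i ≠ y i := by
      by_contra hc; push_neg at hc; exact hxy (funext hc)
    apply Finset.prod_eq_zero (Finset.mem_univ i)
    revert hi; cases x i <;> cases y i <;> simp [bsgn]

lemma card_fun_bool (n : ℕ) : (Fintype.card (Fin n → Bool) : ℝ) = 2^n := by simp

lemma inversion {n} (g : (Fin n → Bool) → ℝ) (y : Fin n → Bool) :
    ∑ S : Finset (Fin n), fhat g S * chiCube S y = g y := by
  unfold fhat expec
  rw [card_fun_bool]
  simp_rw [div_mul_eq_mul_div, ← Finset.sum_div, Finset.sum_mul]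
  rw [Finset.sum_comm]
  have key : ∀ x, ∑ S : Finset (Fin n), g x * chiCube S x * chiCube S y
      = g x * (if x = y then (2:ℝ)^n else 0) := by
    intro x
    rw [← sum_chi x y, Finset.mul_sum]
    simp [mul_assoc]
  simp_rw [key]
  simp only [mul_ite, mul_zero]
  rw [Finset.sum_ite_eq' Finset.univ y (fun x => g x * (2:ℝ)^n)]
  simp only [Finset.mem_univ, if_pos]
  field_simp

theorem stmt_0 (n : ℕ) (f : (Fin n → Bool) → ℝ) :
    (∀ x : Fin n → Bool, Even ((univ.filter fun i => x i)).card → f x = 0) ↔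
      (∀ S : Finset (Fin n), fhat f S = - fhat f Sᶜ) := by
  constructor
  · intro h S
    have key : ∀ x, f x * chiCube S x + f x * chiCube Sᶜ x = 0 := by
      intro x
      rcases Nat.even_or_odd ((univ.filter fun i => x i)).card with he | ho
      · rw [h x he]; ring
      · have hu : chiCube univ x = -1 := by rw [chi_univ, ho.neg_one_pow]
        rw [chi_compl, hu]; ring
    rw [eq_neg_iff_add_eq_zero]
    unfold fhat expec
    rw [← add_div, ← Finset.sum_add_distrib]
    simp [key]
  · intro h x hx
    set g : (Fin n → Bool) → ℝ := fun y => f y * (1 + chiCube univ y) with hgdef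
    have hg : ∀ S, fhat g S = 0 := by
      intro S
      have hpt : ∀ y, g y * chiCube S y = f y * chiCube S y + f y * chiCube Sᶜ y := by
        intro y; rw [chi_compl, hgdef]; ring
      have : fhat g S = fhat f S + fhat f Sᶜ := by
        unfold fhat expec
        rw [← add_div, ← Finset.sum_add_distrib]
        congr 1
        exact Finset.sum_congr rfl fun y _ => hpt y
      rw [this, h S]; ring
    have h0 : g x = 0 := by
      rw [← inversion g x]
      simp [hg]
    have hu : chiCube univ x = 1 := by rw [chi_univ, hx.neg_one_pow]
    rw [hgdef] at h0
    simp only [hu] at h0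
    linarith
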